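/- In any infinite word over a pushdown alphabet, there is at most one infinite maximal abstract path. -/

import Mathlib

/-- The type of a position in a word over a pushdown alphabet. -/
inductive SymType : Type
  | call | ret | int
deriving DecidableEq

/-- The factor strictly between `i` and `j` is well matched:
calls and returns balance out, and no prefix has more returns than calls. -/
def wellMatched (kind : ℕ → SymType) (i j : ℕ) : Prop :=
  (((Finset.Ioo i j).filter fun k => kind k = SymType.call).card =
   ((Finset.Ioo i j).filter fun k => kind k = SymType.ret).card) ∧
  ∀ m ∈ Finset.Ioo i j,
    ((Finset.Ioc i m).filter fun k => kind k = SymType.ret).card ≤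
    ((Finset.Ioc i m).filter fun k => kind k = SymType.call).card

/-- `j` is the matching return of the call `i`: the least return `j > i`
such that the factor strictly between `i` and `j` is well matched. -/
def MatchRet (kind : ℕ → SymType) (i j : ℕ) : Prop :=
  kind i = SymType.call ∧ i < j ∧ kind j = SymType.ret ∧ wellMatched kind i j ∧
  ∀ j', i < j' → j' < j → ¬ (kind j' = SymType.ret ∧ wellMatched kind i j')

/-- The abstract successor relation: a matched call maps to its matching
return; any non-call position maps to the next position provided it is not
a return. Unmatched calls (and positions followed by a return) have no
abstract successor. -/
def absSucc (kind : ℕ → SymType) (i j : ℕ) : Prop :=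
  (kind i = SymType.call ∧ MatchRet kind i j) ∨
  (kind i ≠ SymType.call ∧ j = i + 1 ∧ kind (i + 1) ≠ SymType.ret)

/-- `j` is reachable from `i` along abstract successors. -/
def reach (kind : ℕ → SymType) : ℕ → ℕ → Prop := Relation.ReflTransGen (absSucc kind)

/-- `i` and `j` lie on the same maximal abstract path (MAP). -/
def onSameMAP (kind : ℕ → SymType) (i j : ℕ) : Prop := reach kind i j ∨ reach kind j i

/-- `s` is the initial position of a MAP: nothing maps to it. -/
def isMAPStart (kind : ℕ → SymType) (s : ℕ) : Prop := ∀ k, ¬ absSucc kind k s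

/-- `s` is the initial position of the MAP visiting `i`. -/
def startsMAPOf (kind : ℕ → SymType) (s i : ℕ) : Prop := isMAPStart kind s ∧ reach kind s i

/-- The MAP visiting `i` is infinite (has no last position). -/
def infMAP (kind : ℕ → SymType) (i : ℕ) : Prop := ∀ j, reach kind i j → ∃ k, absSucc kind j k

/-- `p_∞` holds at `i` iff the MAP visiting `i` does not start at a position
`s > 0` such that `s - 1` is a call having a matching return. -/
def pInf (kind : ℕ → SymType) (i : ℕ) : Prop :=
  ¬ ∃ s, startsMAPOf kind s i ∧ 0 < s ∧ kind (s - 1) = SymType.call ∧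
    ∃ r, MatchRet kind (s - 1) r
-- counting infrastructure
def cnt (kind : ℕ → SymType) (t : SymType) (i n : ℕ) : ℕ :=
  ((Finset.Ioc i n).filter fun k => kind k = t).card

def bal (kind : ℕ → SymType) (i n : ℕ) : ℤ :=
  (cnt kind SymType.call i n : ℤ) - (cnt kind SymType.ret i n : ℤ)

lemma cnt_self (kind : ℕ → SymType) (t : SymType) (i : ℕ) : cnt kind t i i = 0 := by
  simp [cnt]

lemma cnt_split (kind : ℕ → SymType) (t : SymType) {i m n : ℕ} (h1 : i ≤ m) (h2 : m ≤ n) :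
    cnt kind t i n = cnt kind t i m + cnt kind t m n := by
  unfold cnt
  rw [← Finset.card_union_of_disjoint, ← Finset.filter_union, Finset.Ioc_union_Ioc_eq_Ioc h1 h2]
  exact Finset.disjoint_filter_filter (by
    rw [Finset.disjoint_left]; intro a ha hb
    simp only [Finset.mem_Ioc] at ha hb; omega)

lemma cnt_adj (kind : ℕ → SymType) (t : SymType) (n : ℕ) :
    cnt kind t n (n+1) = if kind (n+1) = t then 1 else 0 := by
  have : Finset.Ioc n (n+1) = {n+1} := by ext k; simp [Finset.mem_Ioc]
  by_cases h : kind (n+1) = t <;> simp [cnt, this, Finset.filter_singleton, h]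

lemma Ioo_eq_Ioc {i j : ℕ} (h : i < j) : Finset.Ioo i j = Finset.Ioc i (j-1) := by
  ext k; simp only [Finset.mem_Ioo, Finset.mem_Ioc]; omega

lemma wm_iff (kind : ℕ → SymType) {i j : ℕ} (h : i < j) :
    wellMatched kind i j ↔ bal kind i (j-1) = 0 ∧ ∀ n, i < n → n < j → 0 ≤ bal kind i n := by
  unfold wellMatched bal cnt
  rw [Ioo_eq_Ioc h]
  constructor
  · rintro ⟨h1, h2⟩
    refine ⟨by omega, fun n hn1 hn2 => ?_⟩
    have := h2 n (by simp [Finset.mem_Ioo]; omega); omega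
  · rintro ⟨h1, h2⟩
    refine ⟨by omega, fun n hn => ?_⟩
    simp only [Finset.mem_Ioc] at hn
    have := h2 n hn.1 (by omega); omega

lemma bal_self (kind : ℕ → SymType) (i : ℕ) : bal kind i i = 0 := by
  simp [bal, cnt_self]

lemma bal_adj (kind : ℕ → SymType) (m n : ℕ) (h : m ≤ n) :
    bal kind m (n+1) = bal kind m n
      + (if kind (n+1) = SymType.call then 1 else 0)
      - (if kind (n+1) = SymType.ret then 1 else 0) := by
  unfold bal
  rw [cnt_split kind SymType.call h (Nat.le_succ n), cnt_split kind SymType.ret h (Nat.le_succ n),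
    cnt_adj, cnt_adj]
  push_cast
  by_cases h1 : kind (n+1) = SymType.call <;> by_cases h2 : kind (n+1) = SymType.ret <;>
    simp [h1, h2] <;> simp_all <;> ring_nf

lemma bal_sub (kind : ℕ → SymType) {a m n : ℕ} (h1 : a ≤ m) (h2 : m ≤ n) :
    bal kind m n = bal kind a n - bal kind a m := by
  unfold bal
  rw [cnt_split kind SymType.call h1 h2, cnt_split kind SymType.ret h1 h2]
  push_cast; ring

/-- Inner matching: inside a well-matched factor, every call has a matching
return strictly before the end. -/
lemma inner_match (kind : ℕ → SymType) {a m b : ℕ} (hw : wellMatched kind a b)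
    (ham : a < m) (hmb : m < b) (hc : kind m = SymType.call) :
    ∃ r, m < r ∧ r < b ∧ kind r = SymType.ret ∧ wellMatched kind m r := by
  rw [wm_iff kind (ham.trans hmb)] at hw
  obtain ⟨hbal, hpre⟩ := hw
  -- bal a m ≥ 1
  have hm1 : m = (m-1) + 1 := by omega
  have hstep : bal kind a m = bal kind a (m-1)
      + (if kind m = SymType.call then 1 else 0)
      - (if kind m = SymType.ret then 1 else 0) := by
    conv_lhs => rw [hm1]
    rw [bal_adj kind a (m-1) (by omega)]; rw [← hm1]
  have hprev : 0 ≤ bal kind a (m-1) := by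
    rcases Nat.eq_or_lt_of_le (Nat.le_of_lt_succ (by omega : a < (m-1)+1)) with h | h
    · rw [← h, bal_self]
    · exact hpre (m-1) h (by omega)
  have ham1 : (1:ℤ) ≤ bal kind a m := by
    rw [hstep, hc]; simp; exact hprev
  -- bal m (b-1) ≤ -1
  have hb1 : m ≤ b - 1 := by omega
  have hend : bal kind m (b-1) ≤ -1 := by
    rw [bal_sub kind (le_of_lt ham) hb1, hbal]; omega
  have hmb1 : m < b - 1 := by
    rcases Nat.eq_or_lt_of_le hb1 with h | h
    · exfalso; rw [← h, bal_self] at hend; omega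
    · exact h
  -- least r in (m, b-1] with bal m r < 0
  have hex : ∃ r, m < r ∧ r ≤ b - 1 ∧ bal kind m r < 0 := ⟨b-1, hmb1, le_refl _, by omega⟩
  classical
  let r := Nat.find hex
  obtain ⟨hr1, hr2, hr3⟩ : m < r ∧ r ≤ b - 1 ∧ bal kind m r < 0 := Nat.find_spec hex
  have hmin : ∀ n, n < r → ¬(m < n ∧ n ≤ b - 1 ∧ bal kind m n < 0) :=
    fun n hn => Nat.find_min hex hn
  have hrm : r = (r-1) + 1 := by omega
  have hprev0 : 0 ≤ bal kind m (r-1) := by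
    rcases Nat.eq_or_lt_of_le (Nat.le_of_lt_succ (by omega : m < (r-1)+1)) with h | h
    · rw [← h, bal_self]
    · have := hmin (r-1) (by omega)
      push_neg at this
      have := this h (by omega)
      omega
  have hstep2 : bal kind m r = bal kind m (r-1)
      + (if kind r = SymType.call then 1 else 0)
      - (if kind r = SymType.ret then 1 else 0) := by
    conv_lhs => rw [hrm]
    rw [bal_adj kind m (r-1) (by omega)]; rw [← hrm]
  have hkr : kind r = SymType.ret := by
    cases hk : kind r <;> rw [hk] at hstep2 <;> simp at hstep2 <;> omega
  have hbr : bal kind m (r-1) = 0 := by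
    rw [hkr] at hstep2; simp at hstep2; omega
  refine ⟨r, hr1, by omega, hkr, ?_⟩
  rw [wm_iff kind hr1]
  refine ⟨hbr, fun n hn1 hn2 => ?_⟩
  have := hmin n hn2
  push_neg at this
  have := this hn1 (by omega)
  omega

lemma absSucc_lt {kind : ℕ → SymType} {i j : ℕ} (h : absSucc kind i j) : i < j := by
  rcases h with ⟨_, _, h, _⟩ | ⟨_, h, _⟩ <;> omega

lemma reach_le {kind : ℕ → SymType} {i j : ℕ} (h : reach kind i j) : i ≤ j := by
  induction h with
  | refl => exact le_refl _
  | tail _ h ih => exact le_of_lt (lt_of_le_of_lt ih (absSucc_lt h))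

lemma infMAP_step {kind : ℕ → SymType} {i m : ℕ} (h : infMAP kind i) (hr : reach kind i m) :
    infMAP kind m := fun j hj => h j (hr.trans hj)

/-- A position strictly inside a matched call/return pair cannot be on an
infinite MAP: its chain is trapped strictly below the return. -/
lemma trapped {kind : ℕ → SymType} {a b p : ℕ} (hab : MatchRet kind a b)
    (hap : a < p) (hpb : p < b) (hp : infMAP kind p) : False := by
  obtain ⟨hca, haltb, hrb, hwab, _⟩ := hab
  -- every position reachable from p stays below b
  have key : ∀ m, reach kind p m → m < b := by
    intro m hm
    induction hm with
    | refl => exact hpb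
    | @tail m m' hr hstep ih =>
      rcases hstep with ⟨hcall, hmm'⟩ | ⟨_, he, hnr⟩
      · obtain ⟨_, hlt, hrm', hwmm', hminm'⟩ := hmm'
        by_contra hge
        push_neg at hge
        obtain ⟨r, hr1, hr2, hr3, hr4⟩ :=
          inner_match kind hwab (lt_of_lt_of_le hap (reach_le hr)) ih hcall
        exact hminm' r hr1 (lt_of_lt_of_le hr2 hge) ⟨hr3, hr4⟩
      · subst he
        rcases Nat.lt_or_ge (m+1) b with h | h
        · exact h
        · have : m + 1 = b := by omega
          rw [this] at hnr; exact absurd hrb hnr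
  -- but an infinite MAP is unbounded
  have unb : ∀ N : ℕ, ∃ m, reach kind p m ∧ N ≤ m := by
    intro N
    induction N with
    | zero => exact ⟨p, Relation.ReflTransGen.refl, Nat.zero_le _⟩
    | succ N ih =>
      obtain ⟨m, hm, hNm⟩ := ih
      obtain ⟨m', hm'⟩ := hp m hm
      exact ⟨m', hm.tail hm', by have := absSucc_lt hm'; omega⟩
  obtain ⟨m, hm, hbm⟩ := unb b
  exact absurd (key m hm) (by omega)

lemma merge {kind : ℕ → SymType} : ∀ d i j, j - i ≤ d → infMAP kind i → infMAP kind j →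
    i ≤ j → reach kind i j := by
  intro d
  induction d with
  | zero =>
    intro i j h _ _ hij
    have : i = j := by omega
    rw [this]
    exact Relation.ReflTransGen.refl
  | succ d ih =>
    intro i j hd hi hj hij
    rcases Nat.eq_or_lt_of_le hij with h | h
    · rw [h]; exact Relation.ReflTransGen.refl
    · obtain ⟨i', hi'⟩ := hi i Relation.ReflTransGen.refl
      have hii' : i < i' := absSucc_lt hi'
      have hreach : reach kind i i' := Relation.ReflTransGen.single hi'
      rcases le_or_gt i' j with h' | h'
      · exact Relation.ReflTransGen.head hi' (ih i' j (by omega) (infMAP_step hi hreach) hj h')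
      · exfalso
        rcases hi' with ⟨_, hm⟩ | ⟨_, he, _⟩
        · exact trapped hm h h' hj
        · omega

/-- there is at most one infinite MAP. -/
theorem infinite_MAP_unique (kind : ℕ → SymType) (i j : ℕ)
    (hi : infMAP kind i) (hj : infMAP kind j) : onSameMAP kind i j := by
  rcases Nat.le_total i j with h | h
  · exact Or.inl (merge (j - i) i j (le_refl _) hi hj h)
  · exact Or.inr (merge (i - j) j i (le_refl _) hj hi h)
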